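/- The chromatic polynomial of the complete multipartite graph K_λ with blocks of sizes λ₁, ..., λ_k evaluated at q equals λ₁!···λ_k! times the coefficient extraction Σ_{μ ≤ λ} binom(q, l(μ)) · multinomial(l(μ); m(μ)) · L_{μλ}/μ!, where L_{μλ} is the number of l(λ)×l(μ) nonnegative integer matrices with column sums μ, row sums λ, and exactly one nonzero entry per column. Equivalently: the generating function Σ_λ χ_{K_λ}(q) m_λ/λ! over all partitions λ equals (1 + Σ_{n≥1} p_n/n!)^q in the ring of symmetric functions, where m_λ are monomial symmetric functions and p_n are power sums. -/

import Mathlib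

open Finset
open scoped Classical

noncomputable def properColorings {W : Type*} (Γ : SimpleGraph W) (q : ℕ) : ℕ :=
  Nat.card {f : W → Fin q // ∀ v w : W, Γ.Adj v w → f v ≠ f w}

noncomputable def expX {k : ℕ} (j : Fin k) : MvPowerSeries (Fin k) ℚ :=
  fun d => if d.support ⊆ {j} then (1 : ℚ) / (Nat.factorial (d j)) else 0


lemma prodXpow {β : Type*} [Fintype β] (kk : β → ℕ) :
    ∏ c : β, (MvPolynomial.X c : MvPolynomial β ℕ) ^ kk c
      = MvPolynomial.monomial (Finsupp.equivFunOnFinite.symm kk) 1 := by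
  classical
  set K : β →₀ ℕ := Finsupp.equivFunOnFinite.symm kk with hK
  have hKc : ∀ c, K c = kk c := fun c => rfl
  rw [← MvPolynomial.prod_X_pow_eq_monomial]
  refine (Finset.prod_subset (subset_univ K.support) ?_).symm.trans ?_
  · intro c _ hc
    have h0 : kk c = 0 := Finsupp.notMem_support_iff.mp hc
    rw [h0, pow_zero]
  · exact Finset.prod_congr rfl fun c _ => by rw [hKc]

lemma card_fiber_count {β : Type*} [Fintype β] [DecidableEq β] (n : ℕ) (t : β → ℕ)
    (ht : ∑ c, t c = n) :
    (Finset.univ.filter fun φ : Fin n → β =>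
        ∀ c, (Finset.univ.filter fun j => φ j = c).card = t c).card
      = Nat.multinomial Finset.univ t := by
  classical
  set T : β →₀ ℕ := Finsupp.equivFunOnFinite.symm t with hT
  have key1 : MvPolynomial.coeff T ((∑ c : β, MvPolynomial.X c : MvPolynomial β ℕ) ^ n)
      = (Finset.univ.filter fun φ : Fin n → β =>
          ∀ c, (Finset.univ.filter fun j => φ j = c).card = t c).card := by
    have h1 : ((∑ c : β, MvPolynomial.X c : MvPolynomial β ℕ)) ^ n
        = ∏ _j : Fin n, (∑ c : β, MvPolynomial.X c : MvPolynomial β ℕ) := by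
      rw [Finset.prod_const, card_univ, Fintype.card_fin]
    rw [h1, Finset.prod_univ_sum]
    have h2 : ∀ φ : Fin n → β, ∏ j : Fin n, (MvPolynomial.X (φ j) : MvPolynomial β ℕ)
        = MvPolynomial.monomial
            (Finsupp.equivFunOnFinite.symm fun c => (Finset.univ.filter fun j => φ j = c).card) 1 := by
      intro φ
      rw [← prodXpow]
      rw [← Finset.prod_fiberwise_of_maps_to (fun j _ => mem_univ (φ j))
        (fun j => (MvPolynomial.X (φ j) : MvPolynomial β ℕ))]
      refine Finset.prod_congr rfl fun c _ => ?_
      have hc : ∏ j ∈ univ.filter (fun j => φ j = c), (MvPolynomial.X (φ j) : MvPolynomial β ℕ)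
          = ∏ _j ∈ univ.filter (fun j => φ j = c), (MvPolynomial.X c : MvPolynomial β ℕ) :=
        Finset.prod_congr rfl fun j hj => by rw [(Finset.mem_filter.mp hj).2]
      rw [hc, Finset.prod_const]
    simp only [Fintype.piFinset_univ] at *
    rw [Finset.sum_congr rfl fun φ _ => h2 φ]
    rw [MvPolynomial.coeff_sum]
    simp only [MvPolynomial.coeff_monomial]
    rw [← Finset.sum_filter]
    simp only [Finset.sum_const, smul_eq_mul, mul_one]
    congr 1
    apply Finset.filter_congr
    intro φ _
    constructor
    · intro h c
      have := congrArg (fun (F : β →₀ ℕ) => F c) h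
      simpa [hT] using this
    · intro h
      ext c
      simpa [hT] using h c
  have key2 : MvPolynomial.coeff T ((∑ c : β, MvPolynomial.X c : MvPolynomial β ℕ) ^ n)
      = Nat.multinomial Finset.univ t := by
    rw [Finset.sum_pow_eq_sum_piAntidiag]
    rw [MvPolynomial.coeff_sum]
    have hmem : t ∈ Finset.piAntidiag (univ : Finset β) n := by
      rw [Finset.mem_piAntidiag]
      exact ⟨ht, fun i _ => mem_univ i⟩
    rw [Finset.sum_eq_single_of_mem t hmem]
    · rw [prodXpow, ← MvPolynomial.C_eq_coe_nat, MvPolynomial.coeff_C_mul,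
        MvPolynomial.coeff_monomial, if_pos rfl, mul_one, Nat.cast_id]
    · intro k _ hk
      rw [prodXpow, ← MvPolynomial.C_eq_coe_nat, MvPolynomial.coeff_C_mul,
        MvPolynomial.coeff_monomial, if_neg, mul_zero]
      intro hEq
      exact hk (by
        have := congrArg Finsupp.equivFunOnFinite hEq
        simpa [hT] using this)
  rw [← key1, key2]

lemma coeff_F {k : ℕ} (μ : Fin k →₀ ℕ) :
    MvPowerSeries.coeff μ (1 + ∑ j : Fin k, (expX j - 1))
      = if μ.support.card ≤ 1 then ∏ i : Fin k, (1 : ℚ) / (Nat.factorial (μ i)) else 0 := by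
  classical
  have hexp : ∀ j : Fin k, MvPowerSeries.coeff μ (expX j)
      = if μ.support ⊆ {j} then (1 : ℚ) / (Nat.factorial (μ j)) else 0 := fun j => rfl
  rw [map_add, map_sum]
  simp only [map_sub, hexp, MvPowerSeries.coeff_one]
  by_cases h0 : μ = 0
  · subst h0
    simp [Finsupp.support_zero]
  · rw [if_neg h0]
    simp only [if_neg h0, sub_zero, zero_add]
    by_cases h1 : μ.support.card ≤ 1
    · -- support is a singleton
      have hne : μ.support.Nonempty := Finsupp.support_nonempty_iff.mpr h0
      have hcard : μ.support.card = 1 := le_antisymm h1 (Finset.card_pos.mpr hne)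
      obtain ⟨j₀, hj₀⟩ := Finset.card_eq_one.mp hcard
      rw [if_pos h1]
      rw [Finset.sum_eq_single j₀]
      · rw [if_pos (by rw [hj₀])]
        have : ∏ i : Fin k, (1:ℚ) / (Nat.factorial (μ i))
            = ∏ i ∈ μ.support, (1:ℚ) / (Nat.factorial (μ i)) := by
          refine (Finset.prod_subset (subset_univ _) ?_).symm
          intro i _ hi
          rw [Finsupp.notMem_support_iff.mp hi]
          simp
        rw [this, hj₀, Finset.prod_singleton]
      · intro j _ hj
        rw [if_neg]
        rw [hj₀]
        intro hsub
        have : j₀ ∈ ({j} : Finset (Fin k)) := hsub (Finset.mem_singleton_self j₀)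
        exact hj (Finset.mem_singleton.mp this).symm
      · intro h; exact absurd (mem_univ j₀) h
    · rw [if_neg h1]
      refine Finset.sum_eq_zero fun j _ => ?_
      rw [if_neg]
      intro hsub
      exact h1 (le_trans (Finset.card_le_card hsub) (by simp))

section aux
variable {k q : ℕ} (lam : Fin k → ℕ)

/-- number of vertices of block `i` getting color `c` -/
def fib (f : ((i : Fin k) × Fin (lam i)) → Fin q) (i : Fin k) (c : Fin q) : ℕ :=
  (Finset.univ.filter fun x : Fin (lam i) => f ⟨i, x⟩ = c).card

noncomputable def fibcnt (f : ((i : Fin k) × Fin (lam i)) → Fin q) : Fin q →₀ (Fin k →₀ ℕ) :=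
  Finsupp.equivFunOnFinite.symm fun c => Finsupp.equivFunOnFinite.symm fun i => fib lam f i c

lemma fibcnt_apply (f : ((i : Fin k) × Fin (lam i)) → Fin q) (c : Fin q) (i : Fin k) :
    fibcnt lam f c i = fib lam f i c := rfl

lemma fib_pos_iff (f : ((i : Fin k) × Fin (lam i)) → Fin q) (i : Fin k) (c : Fin q) :
    fib lam f i c ≠ 0 ↔ ∃ x, f ⟨i, x⟩ = c := by
  unfold fib
  rw [← Nat.pos_iff_ne_zero, Finset.card_pos]
  constructor
  · rintro ⟨x, hx⟩
    exact ⟨x, (Finset.mem_filter.mp hx).2⟩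
  · rintro ⟨x, hx⟩
    exact ⟨x, Finset.mem_filter.mpr ⟨mem_univ x, hx⟩⟩

lemma proper_iff (f : ((i : Fin k) × Fin (lam i)) → Fin q) :
    (∀ v w : (i : Fin k) × Fin (lam i), v.1 ≠ w.1 → f v ≠ f w)
      ↔ ∀ c, ((fibcnt lam f) c).support.card ≤ 1 := by
  constructor
  · intro hp c
    rw [Finset.card_le_one]
    intro i hi i' hi'
    rw [Finsupp.mem_support_iff, fibcnt_apply, fib_pos_iff] at hi hi'
    obtain ⟨x, hx⟩ := hi
    obtain ⟨x', hx'⟩ := hi'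
    by_contra hne
    exact hp ⟨i, x⟩ ⟨i', x'⟩ hne (hx.trans hx'.symm)
  · intro hs v w hvw hfc
    have h1 : v.1 ∈ ((fibcnt lam f) (f w)).support := by
      rw [Finsupp.mem_support_iff, fibcnt_apply, fib_pos_iff]
      exact ⟨v.2, by rw [Sigma.eta]; exact hfc⟩
    have h2 : w.1 ∈ ((fibcnt lam f) (f w)).support := by
      rw [Finsupp.mem_support_iff, fibcnt_apply, fib_pos_iff]
      exact ⟨w.2, by rw [Sigma.eta]⟩
    exact hvw (Finset.card_le_one.mp (hs (f w)) _ h1 _ h2)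

lemma fibcnt_mem (f : ((i : Fin k) × Fin (lam i)) → Fin q) :
    fibcnt lam f ∈ Finset.finsuppAntidiag (univ : Finset (Fin q))
      (Finsupp.equivFunOnFinite.symm lam) := by
  rw [Finset.mem_finsuppAntidiag]
  refine ⟨?_, fun c _ => mem_univ _⟩
  ext i
  rw [Finset.sum_apply']
  simp only [fibcnt_apply]
  have : ∀ c ∈ (univ : Finset (Fin q)), fib lam f i c = fib lam f i c := fun _ _ => rfl
  have hcard := Finset.card_eq_sum_card_fiberwise
    (f := fun x : Fin (lam i) => f ⟨i, x⟩) (s := univ) (t := univ) (fun x _ => mem_univ _)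
  have h3 : (Finsupp.equivFunOnFinite.symm lam) i = lam i := rfl
  have h2 : (univ : Finset (Fin (lam i))).card = lam i := by simp
  rw [h3, ← h2, hcard]
  rfl

lemma fiber_card_eq (l : Fin q →₀ (Fin k →₀ ℕ)) :
    (Finset.univ.filter fun f : ((i : Fin k) × Fin (lam i)) → Fin q =>
        ∀ i c, fib lam f i c = l c i).card
      = ∏ i : Fin k, (Finset.univ.filter fun φ : Fin (lam i) → Fin q =>
          ∀ c, (Finset.univ.filter fun x => φ x = c).card = l c i).card := by
  classical
  rw [← Fintype.card_subtype]
  have e : {f : ((i : Fin k) × Fin (lam i)) → Fin q // ∀ i c, fib lam f i c = l c i}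
      ≃ ∀ i : Fin k, {φ : Fin (lam i) → Fin q //
          ∀ c, (Finset.univ.filter fun x => φ x = c).card = l c i} := by
    refine (Equiv.subtypeEquiv (Equiv.piCurry fun _ _ => Fin q) ?_).trans
      (Equiv.subtypePiEquivPi)
    intro f
    rfl
  rw [Fintype.card_congr e, Fintype.card_pi]
  exact Finset.prod_congr rfl fun i _ => Fintype.card_subtype _
end aux


theorem stmt6 (k : ℕ) (lam : Fin k → ℕ) (q : ℕ) :
    (properColorings (SimpleGraph.completeMultipartiteGraph (fun i : Fin k => Fin (lam i))) q : ℚ) =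
      (∏ i : Fin k, (Nat.factorial (lam i)) : ℕ) *
        MvPowerSeries.coeff (Finsupp.equivFunOnFinite.symm lam)
          ((1 + ∑ j : Fin k, (expX j - 1)) ^ q) := by
  classical
  set Λ : Fin k →₀ ℕ := Finsupp.equivFunOnFinite.symm lam with hΛ
  -- RHS expansion
  have hpow : (1 + ∑ j : Fin k, (expX j - 1)) ^ q
      = ∏ _c : Fin q, (1 + ∑ j : Fin k, (expX j - 1)) := by
    rw [Finset.prod_const, card_univ, Fintype.card_fin]
  rw [hpow, MvPowerSeries.coeff_prod]
  simp only [coeff_F]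
  -- LHS as a Finset card
  have hL : (properColorings
      (SimpleGraph.completeMultipartiteGraph (fun i : Fin k => Fin (lam i))) q)
      = (Finset.univ.filter fun f : ((i : Fin k) × Fin (lam i)) → Fin q =>
          ∀ v w : (i : Fin k) × Fin (lam i), v.1 ≠ w.1 → f v ≠ f w).card := by
    rw [properColorings, Nat.card_eq_fintype_card]
    rw [Fintype.card_subtype]
    congr 1
  rw [hL]
  rw [Finset.card_eq_sum_card_fiberwise
    (f := fibcnt lam) (t := Finset.finsuppAntidiag (univ : Finset (Fin q)) Λ)
    (fun f _ => fibcnt_mem lam f)]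
  push_cast
  rw [Finset.mul_sum]
  refine Finset.sum_congr rfl fun l hl => ?_
  have hlsum : ∀ i : Fin k, ∑ c : Fin q, l c i = lam i := by
    intro i
    have hmem := (Finset.mem_finsuppAntidiag.mp hl).1
    have := congrArg (fun F : Fin k →₀ ℕ => F i) hmem
    simpa [Finset.sum_apply', hΛ] using this
  by_cases hgood : ∀ c : Fin q, (l c).support.card ≤ 1
  · -- good case
    have hfilter : ((Finset.univ.filter fun f : ((i : Fin k) × Fin (lam i)) → Fin q =>
          ∀ v w : (i : Fin k) × Fin (lam i), v.1 ≠ w.1 → f v ≠ f w).filter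
            fun f => fibcnt lam f = l)
        = Finset.univ.filter fun f : ((i : Fin k) × Fin (lam i)) → Fin q =>
            ∀ i c, fib lam f i c = l c i := by
      rw [Finset.filter_filter]
      refine Finset.filter_congr fun f _ => ?_
      constructor
      · rintro ⟨-, hc⟩ i c
        rw [← hc]; rfl
      · intro h
        have hcnt : fibcnt lam f = l := by
          ext c i
          rw [fibcnt_apply]; exact h i c
        refine ⟨?_, hcnt⟩
        rw [proper_iff]
        intro c
        rw [hcnt]
        exact hgood c
    rw [hfilter, fiber_card_eq]
    have hterm : ∀ i : Fin k,
        ((Finset.univ.filter fun φ : Fin (lam i) → Fin q =>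
          ∀ c, (Finset.univ.filter fun x => φ x = c).card = l c i).card : ℚ)
        = (Nat.factorial (lam i) : ℚ) * ∏ c : Fin q, (1 : ℚ) / (Nat.factorial (l c i)) := by
      intro i
      have hcfc := card_fiber_count (β := Fin q) (lam i) (fun c => l c i) (hlsum i)
      have h2 : (Finset.univ.filter fun φ : Fin (lam i) → Fin q =>
          ∀ c, (Finset.univ.filter fun x => φ x = c).card = l c i).card
          = Nat.multinomial Finset.univ (fun c => l c i) := by
        convert hcfc using 2
        ext φ
        simp [Finset.mem_filter]
      rw [h2]
      have hspec := Nat.multinomial_spec (univ : Finset (Fin q)) (fun c => l c i)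
      rw [hlsum i] at hspec
      have hcast : ((∏ c : Fin q, Nat.factorial (l c i)) : ℚ)
          * (Nat.multinomial (univ : Finset (Fin q)) (fun c => l c i) : ℚ)
          = (Nat.factorial (lam i) : ℚ) := by exact_mod_cast congrArg Nat.cast hspec
      have hne : ((∏ c : Fin q, Nat.factorial (l c i)) : ℚ) ≠ 0 := by
        push_cast
        exact Finset.prod_ne_zero_iff.mpr fun c _ => Nat.cast_ne_zero.mpr (Nat.factorial_ne_zero _)
      rw [show ∏ c : Fin q, (1 : ℚ) / (Nat.factorial (l c i))
          = ((∏ c : Fin q, (Nat.factorial (l c i) : ℚ)))⁻¹ by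
        rw [← Finset.prod_inv_distrib]
        exact Finset.prod_congr rfl fun c _ => one_div _]
      push_cast at hcast ⊢
      field_simp at hcast ⊢
      linarith [hcast]
    push_cast
    rw [Finset.prod_congr rfl fun i (_ : i ∈ univ) => hterm i]
    rw [Finset.prod_mul_distrib]
    rw [Finset.prod_comm]
    rw [Finset.prod_congr rfl fun c (_ : c ∈ (univ : Finset (Fin q))) => (if_pos (hgood c))]
  · -- bad case
    push_neg at hgood
    obtain ⟨c₀, hc₀⟩ := hgood
    have hzero : ∏ c : Fin q, (if (l c).support.card ≤ 1
        then ∏ i : Fin k, (1 : ℚ) / (Nat.factorial (l c i)) else 0) = 0 :=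
      Finset.prod_eq_zero (mem_univ c₀) (if_neg (not_le.mpr hc₀))
    rw [hzero, mul_zero]
    have hempty : ((Finset.univ.filter fun f : ((i : Fin k) × Fin (lam i)) → Fin q =>
          ∀ v w : (i : Fin k) × Fin (lam i), v.1 ≠ w.1 → f v ≠ f w).filter
            fun f => fibcnt lam f = l) = ∅ := by
      rw [Finset.filter_eq_empty_iff]
      intro f hf
      rw [Finset.mem_filter] at hf
      intro hcnt
      have := (proper_iff lam f).mp hf.2 c₀
      rw [hcnt] at this
      exact absurd this (not_le.mpr hc₀)
    rw [hempty]
    simp
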